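/- Asymptotic upper bound for the susceptible population of an isolated patch: Let b ≥ 0, d^H > 0, v ≥ 0, ε ≥ 0, γ ≥ 0, δ ≥ 0, ζ ≥ 0, d^C > 0, β^I ≥ 0, β^W ≥ 0, and let (S, I, R, W) : [0,∞) → ℝ^4 be a differentiable solution of the isolated-patch cholera system with S(t) ≥ 0, I(t) ≥ 0, W(t) ≥ 0 and R(t) ≤ b/d^H for all t ≥ 0. Then limsup_{t→∞} S(t) ≤ (b/(v + d^H)) · (1 + ε/d^H). -/

import Mathlib

open Filter

/-- Asymptotic upper bound for the susceptible population of an isolated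
patch of the cholera model. -/
theorem cholera_isolated_patch_susceptible_limsup_bound
    (b dH v ε γ δ ζ dC βI βW : ℝ)
    (hb : 0 ≤ b) (hdH : 0 < dH) (hv : 0 ≤ v) (hε : 0 ≤ ε) (hγ : 0 ≤ γ)
    (hδ : 0 ≤ δ) (hζ : 0 ≤ ζ) (hdC : 0 < dC) (hβI : 0 ≤ βI) (hβW : 0 ≤ βW)
    (S I R W : ℝ → ℝ)
    (hS : ∀ t, 0 ≤ t → HasDerivWithinAt S
      (b + ε * R t - (βI * I t + βW * W t) * S t - (v + dH) * S t)
      (Set.Ici (0:ℝ)) t)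
    (hI : ∀ t, 0 ≤ t → HasDerivWithinAt I
      ((βI * I t + βW * W t) * S t - (γ + δ + dH) * I t) (Set.Ici (0:ℝ)) t)
    (hR : ∀ t, 0 ≤ t → HasDerivWithinAt R
      (γ * I t + v * S t - (ε + dH) * R t) (Set.Ici (0:ℝ)) t)
    (hW : ∀ t, 0 ≤ t → HasDerivWithinAt W
      (ζ * I t - dC * W t) (Set.Ici (0:ℝ)) t)
    (hSnn : ∀ t, 0 ≤ t → 0 ≤ S t)
    (hInn : ∀ t, 0 ≤ t → 0 ≤ I t)
    (hWnn : ∀ t, 0 ≤ t → 0 ≤ W t)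
    (hRub : ∀ t, 0 ≤ t → R t ≤ b / dH) :
    limsup S atTop ≤ (b / (v + dH)) * (1 + ε / dH) := by
  set k : ℝ := v + dH with hk
  have hkpos : 0 < k := by positivity
  set M : ℝ := (b / (v + dH)) * (1 + ε / dH) with hM
  -- key pointwise bound: S x ≤ M + (S 0 - M) * exp (-k * x) for x ≥ 0
  have key : ∀ x : ℝ, 0 ≤ x → S x ≤ M + (S 0 - M) * Real.exp (-k * x) := by
    intro x hx
    have hcont : ContinuousOn S (Set.Icc 0 x) := fun t ht =>
      ((hS t ht.1).continuousWithinAt).mono (fun z hz => hz.1)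
    have hgb := le_gronwallBound_of_liminf_deriv_right_le (f := fun t => S t - M)
      (f' := fun t => b + ε * R t - (βI * I t + βW * W t) * S t - (v + dH) * S t)
      (δ := S 0 - M) (K := -k) (ε := 0) (a := 0) (b := x)
      (by exact (hcont.sub continuousOn_const))
      (fun t ht r hr => by
        have hd : HasDerivWithinAt (fun t => S t - M)
            (b + ε * R t - (βI * I t + βW * W t) * S t - (v + dH) * S t)
            (Set.Ici t) t :=
          (((hS t ht.1).mono (Set.Ici_subset_Ici.2 ht.1))).sub_const M
        exact hd.liminf_right_slope_le hr)
      le_rfl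
      (fun t ht => by
        have h1 : ε * R t ≤ ε * (b / dH) := mul_le_mul_of_nonneg_left (hRub t ht.1) hε
        have h2 : 0 ≤ (βI * I t + βW * W t) * S t := by
          have := hInn t ht.1; have := hWnn t ht.1; have := hSnn t ht.1
          positivity
        have hMk : k * M = b + ε * (b / dH) := by
          field_simp [hM, hk]
          have hne : v + dH ≠ 0 := by positivity
          rw [hM, hk]; field_simp
        have : b + ε * R t - (βI * I t + βW * W t) * S t - (v + dH) * S t
            ≤ b + ε * (b / dH) - k * S t := by
          rw [hk]; nlinarith
        have h3 : -k * (S t - M) + 0 = (b + ε * (b / dH)) - k * S t := by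
          linear_combination hMk
        rw [h3]
        linarith [this])
      x ⟨hx, le_rfl⟩
    have := hgb
    rw [gronwallBound_ε0] at this
    simp only [sub_zero] at this
    linarith [this]
  -- the bound tends to M
  have htend : Tendsto (fun x => M + (S 0 - M) * Real.exp (-k * x)) atTop (nhds M) := by
    have : Tendsto (fun x : ℝ => Real.exp (-k * x)) atTop (nhds 0) := by
      have h0 := Real.tendsto_exp_neg_atTop_nhds_zero.comp
        ((tendsto_const_mul_atTop_of_pos hkpos).2 tendsto_id)
      simpa [Function.comp_def, neg_mul] using h0
    have h2 : Tendsto (fun x => (S 0 - M) * Real.exp (-k * x)) atTop (nhds 0) := by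
      simpa using this.const_mul (S 0 - M)
    simpa using (tendsto_const_nhds (x := M)).add h2
  have hev : ∀ᶠ x in atTop, S x ≤ M + (S 0 - M) * Real.exp (-k * x) :=
    eventually_atTop.2 ⟨0, fun x hx => key x hx⟩
  have hcb : IsCoboundedUnder (· ≤ ·) atTop S :=
    isCoboundedUnder_le_of_eventually_le atTop (x := 0)
      (eventually_atTop.2 ⟨0, fun x hx => hSnn x hx⟩)
  have hbd : IsBoundedUnder (· ≤ ·) atTop (fun x => M + (S 0 - M) * Real.exp (-k * x)) :=
    htend.isBoundedUnder_le
  calc limsup S atTop ≤ limsup (fun x => M + (S 0 - M) * Real.exp (-k * x)) atTop :=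
        limsup_le_limsup hev hcb hbd
    _ = M := htend.limsup_eq
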